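/- arXiv:2509.10421 — 2 statements merged into one kernel-verified Lean document; each statement's English description precedes it below -/
import Mathlib

section
/- The ME Weibull joint reliability function is 2-increasing (a valid bivariate survival function): for all 0 ≤ t₁ ≤ t₂ and 0 ≤ u₁ ≤ u₂, R(t₁, u₁) − R(t₂, u₁) − R(t₁, u₂) + R(t₂, u₂) ≥ 0, whenever 0 < θ ≤ 1. -/
/-- The joint reliability function of the multivariate extension (ME) Weibull model:
`R(t,u) = exp{−[(t/η_T)^{λ_T/θ} + (u/η_U)^{λ_U/θ}]^θ}`, where real exponents are
interpreted via `Real.rpow`. -/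
noncomputable def MEReliability (etaT lamT etaU lamU θ t u : ℝ) : ℝ :=
  Real.exp (-(((t / etaT) ^ (lamT / θ) + (u / etaU) ^ (lamU / θ)) ^ θ))

/-- `exp ∘ f` is convex whenever `f` is convex. -/
lemma convexOn_exp_comp {s : Set ℝ} {f : ℝ → ℝ} (hf : ConvexOn ℝ s f) :
    ConvexOn ℝ s (fun x => Real.exp (f x)) := by
  refine ⟨hf.1, fun x hx y hy a b ha hb hab => ?_⟩
  calc Real.exp (f (a • x + b • y)) ≤ Real.exp (a * f x + b * f y) := by
        exact Real.exp_le_exp.2 (by simpa [smul_eq_mul] using hf.2 hx hy ha hb hab)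
    _ ≤ a * Real.exp (f x) + b * Real.exp (f y) := by
        simpa [smul_eq_mul] using
          convexOn_exp.2 (Set.mem_univ (f x)) (Set.mem_univ (f y)) ha hb hab
    _ = a • Real.exp (f x) + b • Real.exp (f y) := by simp [smul_eq_mul]

/-- `fun s => exp (-(s ^ θ))` is convex on `[0, ∞)` for `0 < θ ≤ 1`. -/
lemma convexOn_exp_neg_rpow {θ : ℝ} (hθ0 : 0 < θ) (hθ1 : θ ≤ 1) :
    ConvexOn ℝ (Set.Ici 0) (fun s : ℝ => Real.exp (-(s ^ θ))) :=
  convexOn_exp_comp ((Real.concaveOn_rpow hθ0.le hθ1).neg)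

/-- Four-point inequality for a convex function on `[0, ∞)`. -/
lemma four_point {φ : ℝ → ℝ} (hφ : ConvexOn ℝ (Set.Ici 0) φ)
    {a b c : ℝ} (ha : 0 ≤ a) (hab : a ≤ b) (hac : a ≤ c) :
    φ b + φ c ≤ φ a + φ (b + c - a) := by
  set d := b + c - a with hd
  rcases eq_or_lt_of_le (hab.trans (le_sub_iff_add_le.2 (by linarith) : b ≤ d)) with h | had
  · have hb : b = a := by linarith
    have hc : c = a := by linarith
    have hda : d = a := by rw [hd]; linarith
    rw [hb, hc, hda]
  · -- a < d
    have hden : 0 < d - a := by linarith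
    set μ := (b - a) / (d - a) with hμ
    have hμ0 : 0 ≤ μ := div_nonneg (by linarith) hden.le
    have hμ1 : μ ≤ 1 := (div_le_one hden).2 (by simp [hd]; linarith)
    have ha' : a ∈ Set.Ici (0 : ℝ) := ha
    have hd' : d ∈ Set.Ici (0 : ℝ) := le_trans ha (by linarith)
    have hbrep : (1 - μ) • a + μ • d = b := by
      have hμd : μ * (d - a) = b - a := by rw [hμ]; exact div_mul_cancel₀ _ hden.ne'
      simp only [smul_eq_mul]; linear_combination hμd
    have hcrep : μ • a + (1 - μ) • d = c := by
      have hμd : μ * (d - a) = b - a := by rw [hμ]; exact div_mul_cancel₀ _ hden.ne'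
      simp only [smul_eq_mul]; linear_combination -hμd + hd
    have h1 := hφ.2 ha' hd' (by linarith : (0:ℝ) ≤ 1 - μ) hμ0 (by ring)
    have h2 := hφ.2 ha' hd' hμ0 (by linarith : (0:ℝ) ≤ 1 - μ) (by ring)
    rw [hbrep] at h1
    rw [hcrep] at h2
    simp only [smul_eq_mul] at h1 h2
    linarith

/-- The ME Weibull joint reliability function is 2-increasing (a valid bivariate
survival function): for all `0 ≤ t₁ ≤ t₂` and `0 ≤ u₁ ≤ u₂`,
`R(t₁,u₁) − R(t₂,u₁) − R(t₁,u₂) + R(t₂,u₂) ≥ 0`, whenever `0 < θ ≤ 1`. -/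
theorem MEReliability_two_increasing (etaT lamT etaU lamU θ : ℝ)
    (hetaT : 0 < etaT) (hlamT : 0 < lamT) (hetaU : 0 < etaU) (hlamU : 0 < lamU)
    (hθ0 : 0 < θ) (hθ1 : θ ≤ 1)
    (t₁ t₂ u₁ u₂ : ℝ) (ht₁ : 0 ≤ t₁) (ht : t₁ ≤ t₂) (hu₁ : 0 ≤ u₁) (hu : u₁ ≤ u₂) :
    0 ≤ MEReliability etaT lamT etaU lamU θ t₁ u₁
        - MEReliability etaT lamT etaU lamU θ t₂ u₁
        - MEReliability etaT lamT etaU lamU θ t₁ u₂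
        + MEReliability etaT lamT etaU lamU θ t₂ u₂ := by
  set φ : ℝ → ℝ := fun s => Real.exp (-(s ^ θ)) with hφdef
  have hφ := convexOn_exp_neg_rpow hθ0 hθ1
  set x₁ := (t₁ / etaT) ^ (lamT / θ) with hx₁
  set x₂ := (t₂ / etaT) ^ (lamT / θ) with hx₂
  set y₁ := (u₁ / etaU) ^ (lamU / θ) with hy₁
  set y₂ := (u₂ / etaU) ^ (lamU / θ) with hy₂
  have hx₁0 : 0 ≤ x₁ := Real.rpow_nonneg (div_nonneg ht₁ hetaT.le) _
  have hy₁0 : 0 ≤ y₁ := Real.rpow_nonneg (div_nonneg hu₁ hetaU.le) _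
  have hxle : x₁ ≤ x₂ :=
    Real.rpow_le_rpow (div_nonneg ht₁ hetaT.le)
      (by gcongr) (div_nonneg hlamT.le hθ0.le)
  have hyle : y₁ ≤ y₂ :=
    Real.rpow_le_rpow (div_nonneg hu₁ hetaU.le)
      (by gcongr) (div_nonneg hlamU.le hθ0.le)
  have key := four_point hφ (a := x₁ + y₁) (b := x₂ + y₁) (c := x₁ + y₂)
    (by positivity) (by linarith) (by linarith)
  have hd : x₂ + y₁ + (x₁ + y₂) - (x₁ + y₁) = x₂ + y₂ := by ring
  rw [hd] at key
  have e11 : MEReliability etaT lamT etaU lamU θ t₁ u₁ = φ (x₁ + y₁) := rfl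
  have e21 : MEReliability etaT lamT etaU lamU θ t₂ u₁ = φ (x₂ + y₁) := rfl
  have e12 : MEReliability etaT lamT etaU lamU θ t₁ u₂ = φ (x₁ + y₂) := rfl
  have e22 : MEReliability etaT lamT etaU lamU θ t₂ u₂ = φ (x₂ + y₂) := rfl
  rw [e11, e21, e12, e22]
  linarith
end

section
/- For all t, u > 0, the mixed second partial derivative ∂²R(t,u)/∂t∂u of the ME Weibull joint reliability function equals the joint density f(t,u) = (λ_T λ_U / (η_T^{λ_T/θ} η_U^{λ_U/θ} θ)) · t^{λ_T/θ − 1} u^{λ_U/θ − 1} [ (t/η_T)^{λ_T/θ} + (u/η_U)^{λ_U/θ} ]^{θ−2} { θ [ (t/η_T)^{λ_T/θ} + (u/η_U)^{λ_U/θ} ]^{θ} − (θ−1) } · exp{−[ (t/η_T)^{λ_T/θ} + (u/η_U)^{λ_U/θ} ]^{θ}}. -/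
/-- For all `t, u > 0`, the mixed second partial derivative `∂²R(t,u)/∂t∂u` of the ME
Weibull joint reliability function equals the joint density
`f(t,u) = (λ_T λ_U / (η_T^{λ_T/θ} η_U^{λ_U/θ} θ)) · t^{λ_T/θ−1} u^{λ_U/θ−1}
· S^{θ−2} · (θ S^θ − (θ−1)) · exp(−S^θ)` where
`S = (t/η_T)^{λ_T/θ} + (u/η_U)^{λ_U/θ}`. -/
theorem MEReliability_mixed_partial_eq_density (etaT lamT etaU lamU θ : ℝ)
    (hetaT : 0 < etaT) (hlamT : 0 < lamT) (hetaU : 0 < etaU) (hlamU : 0 < lamU)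
    (hθ0 : 0 < θ) (hθ1 : θ ≤ 1) (t u : ℝ) (ht : 0 < t) (hu : 0 < u) :
    deriv (fun s => deriv (fun v => MEReliability etaT lamT etaU lamU θ s v) u) t =
      (lamT * lamU / (etaT ^ (lamT / θ) * etaU ^ (lamU / θ) * θ))
        * t ^ (lamT / θ - 1) * u ^ (lamU / θ - 1)
        * ((t / etaT) ^ (lamT / θ) + (u / etaU) ^ (lamU / θ)) ^ (θ - 2)
        * (θ * ((t / etaT) ^ (lamT / θ) + (u / etaU) ^ (lamU / θ)) ^ θ - (θ - 1))
        * Real.exp (-(((t / etaT) ^ (lamT / θ) + (u / etaU) ^ (lamU / θ)) ^ θ)) := by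
  have hθ : θ ≠ 0 := hθ0.ne'
  set a := lamT / θ with ha
  set b := lamU / θ with hb
  have hCpos : (0:ℝ) < (u / etaU) ^ b := Real.rpow_pos_of_pos (div_pos hu hetaU) b
  -- the inner partial derivative, for every s > 0
  have inner : ∀ s, 0 < s →
      deriv (fun v => MEReliability etaT lamT etaU lamU θ s v) u
        = Real.exp (-(((s/etaT)^a + (u/etaU)^b)^θ))
            * (-((1/etaU * b * (u/etaU)^(b-1)) * θ * ((s/etaT)^a + (u/etaU)^b)^(θ-1))) := by
    intro s hs
    have hSpos : 0 < (s/etaT)^a + (u/etaU)^b :=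
      add_pos (Real.rpow_pos_of_pos (div_pos hs hetaT) a) hCpos
    have h1 : HasDerivAt (fun v : ℝ => v / etaU) (1/etaU) u := by
      simpa using (hasDerivAt_id u).div_const etaU
    have h2 : HasDerivAt (fun v : ℝ => (v/etaU)^b)
        (1/etaU * b * (u/etaU)^(b-1)) u :=
      h1.rpow_const (Or.inl (div_pos hu hetaU).ne')
    have h3 : HasDerivAt (fun v : ℝ => (s/etaT)^a + (v/etaU)^b)
        (1/etaU * b * (u/etaU)^(b-1)) u := h2.const_add _
    have h4 : HasDerivAt (fun v : ℝ => ((s/etaT)^a + (v/etaU)^b)^θ)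
        ((1/etaU * b * (u/etaU)^(b-1)) * θ * ((s/etaT)^a + (u/etaU)^b)^(θ-1)) u :=
      h3.rpow_const (Or.inl hSpos.ne')
    have h5 := (h4.neg).exp
    simpa [MEReliability, ha, hb] using h5.deriv
  have hmem : {s : ℝ | 0 < s} ∈ nhds t := by
    exact (isOpen_Ioi.mem_nhds (by simpa using ht) : Set.Ioi (0:ℝ) ∈ nhds t)
  have hEq : (fun s => deriv (fun v => MEReliability etaT lamT etaU lamU θ s v) u)
      =ᶠ[nhds t] (fun s => Real.exp (-(((s/etaT)^a + (u/etaU)^b)^θ))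
            * (-((1/etaU * b * (u/etaU)^(b-1)) * θ * ((s/etaT)^a + (u/etaU)^b)^(θ-1)))) :=
    Filter.eventuallyEq_of_mem hmem (fun s hs => inner s hs)
  rw [hEq.deriv_eq]
  -- now differentiate the explicit inner derivative in s at t
  have hSpos : 0 < (t/etaT)^a + (u/etaU)^b :=
    add_pos (Real.rpow_pos_of_pos (div_pos ht hetaT) a) hCpos
  set D : ℝ := 1/etaU * b * (u/etaU)^(b-1) with hD
  set St' : ℝ := 1/etaT * a * (t/etaT)^(a-1) with hSt'
  have hT1 : HasDerivAt (fun s : ℝ => s / etaT) (1/etaT) t := by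
    simpa using (hasDerivAt_id t).div_const etaT
  have hT2 : HasDerivAt (fun s : ℝ => (s/etaT)^a) St' t :=
    hT1.rpow_const (Or.inl (div_pos ht hetaT).ne')
  have hT3 : HasDerivAt (fun s : ℝ => (s/etaT)^a + (u/etaU)^b) St' t := hT2.add_const _
  have h4 : HasDerivAt (fun s : ℝ => ((s/etaT)^a + (u/etaU)^b)^θ)
      (St' * θ * ((t/etaT)^a + (u/etaU)^b)^(θ-1)) t := hT3.rpow_const (Or.inl hSpos.ne')
  have h5 : HasDerivAt (fun s : ℝ => Real.exp (-(((s/etaT)^a + (u/etaU)^b)^θ)))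
      (Real.exp (-(((t/etaT)^a + (u/etaU)^b)^θ))
        * (-(St' * θ * ((t/etaT)^a + (u/etaU)^b)^(θ-1)))) t := (h4.neg).exp
  have h6 : HasDerivAt (fun s : ℝ => ((s/etaT)^a + (u/etaU)^b)^(θ-1))
      (St' * (θ-1) * ((t/etaT)^a + (u/etaU)^b)^(θ-1-1)) t :=
    hT3.rpow_const (Or.inl hSpos.ne')
  have h7 : HasDerivAt (fun s : ℝ => -(D * θ * ((s/etaT)^a + (u/etaU)^b)^(θ-1)))
      (-(D * θ * (St' * (θ-1) * ((t/etaT)^a + (u/etaU)^b)^(θ-1-1)))) t :=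
    (h6.const_mul (D * θ)).neg
  have h8 := h5.mul h7
  rw [HasDerivAt.deriv (f := fun s => Real.exp (-(((s/etaT)^a + (u/etaU)^b)^θ)) * (-(D * θ * ((s/etaT)^a + (u/etaU)^b)^(θ-1)))) h8]
  -- algebraic simplification
  set S : ℝ := (t/etaT)^a + (u/etaU)^b with hS
  have e1 : S^(θ-1) * S^(θ-1) = S^(θ-2) * S^θ := by
    rw [← Real.rpow_add hSpos, ← Real.rpow_add hSpos]; ring_nf
  have e2 : θ - 1 - 1 = θ - 2 := by ring
  have e3 : (t/etaT)^(a-1) = t^(a-1) / etaT^(a-1) := Real.div_rpow ht.le hetaT.le _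
  have e4 : (u/etaU)^(b-1) = u^(b-1) / etaU^(b-1) := Real.div_rpow hu.le hetaU.le _
  have e5 : etaT^(a-1) = etaT^a / etaT := Real.rpow_sub_one hetaT.ne' a
  have e6 : etaU^(b-1) = etaU^b / etaU := Real.rpow_sub_one hetaU.ne' b
  have hetaTa : (0:ℝ) < etaT^a := Real.rpow_pos_of_pos hetaT a
  have hetaUb : (0:ℝ) < etaU^b := Real.rpow_pos_of_pos hetaU b
  have hab : a * b * θ = lamT * lamU / θ := by
    rw [ha, hb]; field_simp
  rw [e2]
  have key : Real.exp (-(S^θ)) * (-(St' * θ * S^(θ-1))) * (-(D * θ * S^(θ-1)))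
      + Real.exp (-(S^θ)) * (-(D * θ * (St' * (θ-1) * S^(θ-2))))
      = (St' * D * θ) * (θ * (S^(θ-1) * S^(θ-1)) - (θ-1) * S^(θ-2)) * Real.exp (-(S^θ)) := by
    ring
  rw [key, e1, hSt', hD, e3, e4, e5, e6, ha, hb]
  field_simp
end
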